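/- F is strictly increasing in the interest rate: for any b ≥ 0 and any −1 ≤ r₁ < r₂ such that Dh(b,r₁) > 0, Dh(b,r₂) > 0, Dl(b,r₁) > 0 and Dl(b,r₂) > 0, one has F(b,r₁) < F(b,r₂). (The positivity of ∂F/∂r established in the proof of Proposition 3.) -/
import Mathlib


/-- High-productivity stationary consumption denominator:
Dh(b,r) = w·zh + (1−β)·(1+r)·b·(1−zh) with w = (ε−1)/ε. -/
noncomputable def Dh (β ε zh : ℝ) (b r : ℝ) : ℝ :=
  ((ε - 1) / ε) * zh + (1 - β) * (1 + r) * b * (1 - zh)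

/-- Low-productivity stationary consumption denominator:
Dl(b,r) = w·zl + (1−β)·(1+r)·b·(1−zl) with w = (ε−1)/ε. -/
noncomputable def Dl (β ε zl : ℝ) (b r : ℝ) : ℝ :=
  ((ε - 1) / ε) * zl + (1 - β) * (1 + r) * b * (1 - zl)

/-- Natural-rate equation residual:
F(b,r) = β·ρ·(1+r)/Dh(b,r) + β·(1−ρ)·(1+r)/Dl(b,r) − ε/(ε−1). -/
noncomputable def F (β ε ρ zh zl : ℝ) (b r : ℝ) : ℝ :=
  β * ρ * (1 + r) / Dh β ε zh b r
    + β * (1 - ρ) * (1 + r) / Dl β ε zl b r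
    - ε / (ε - 1)

/-- F is strictly increasing in the interest rate (positivity of ∂F/∂r in the
proof of Proposition 3). -/
theorem stmt_10 (β ε ρ zh zl : ℝ)
    (hβ0 : 0 < β) (hβ1 : β < 1) (hε : 1 < ε)
    (hρ0 : 0 < ρ) (hρ1 : ρ < 1)
    (hzl0 : 0 < zl) (hzl1 : zl < 1) (hzh : 1 < zh)
    (hmean : ρ * zh + (1 - ρ) * zl = 1) :
    ∀ b r₁ r₂ : ℝ, 0 ≤ b → -1 ≤ r₁ → r₁ < r₂ →
      Dh β ε zh b r₁ > 0 → Dh β ε zh b r₂ > 0 →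
      Dl β ε zl b r₁ > 0 → Dl β ε zl b r₂ > 0 →
      F β ε ρ zh zl b r₁ < F β ε ρ zh zl b r₂ := by
  intro b r₁ r₂ hb h1 hlt hDh1 hDh2 hDl1 hDl2
  have hw : 0 < (ε - 1) / ε := div_pos (by linarith) (by linarith)
  have hwh : 0 < ((ε - 1) / ε) * zh := mul_pos hw (by linarith)
  have hwl : 0 < ((ε - 1) / ε) * zl := mul_pos hw hzl0
  have hβρ : 0 < β * ρ := mul_pos hβ0 hρ0
  have hβρ' : 0 < β * (1 - ρ) := mul_pos hβ0 (by linarith)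
  have hd : 0 < r₂ - r₁ := sub_pos.mpr hlt
  have hH : β * ρ * (1 + r₁) / Dh β ε zh b r₁
      < β * ρ * (1 + r₂) / Dh β ε zh b r₂ := by
    rw [div_lt_div_iff₀ hDh1 hDh2]
    unfold Dh
    nlinarith [mul_pos (mul_pos hβρ hwh) hd]
  have hL : β * (1 - ρ) * (1 + r₁) / Dl β ε zl b r₁
      < β * (1 - ρ) * (1 + r₂) / Dl β ε zl b r₂ := by
    rw [div_lt_div_iff₀ hDl1 hDl2]
    unfold Dl
    nlinarith [mul_pos (mul_pos hβρ' hwl) hd]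
  unfold F
  linarith
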